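/- Let φ_λ : M × ℝ → M, λ ∈ [0,1], be a parametrized family of dissipative flows on a noncompact, locally compact metric space M, and for each λ let K_λ denote the global attractor of φ_λ. Then the family (K_λ)_{λ∈[0,1]} is a continuation of K_0 if and only if the family (φ_λ)_{λ∈[0,1]} is uniformly dissipative. -/

import Mathlib

open Set Metric Filter Topology Bornology

section Defs

variable {M : Type*} [TopologicalSpace M]

/-- A (continuous) flow on a topological space. -/
def IsFlow (φ : M → ℝ → M) : Prop :=
  Continuous (fun p : M × ℝ => φ p.1 p.2) ∧
    (∀ x, φ x 0 = x) ∧ ∀ x s t, φ (φ x s) t = φ x (s + t)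

/-- A set `S` is invariant for the flow `φ` if `φ(S,t) = S` for every `t`. -/
def FlowInvariant (φ : M → ℝ → M) (S : Set M) : Prop :=
  ∀ t : ℝ, (fun x => φ x t) '' S = S

/-- The omega-limit set `ω(x) = ⋂_{t>0} cl (φ(x,[t,∞)))`. -/
def omegaLimitSet (φ : M → ℝ → M) (x : M) : Set M :=
  ⋂ t ∈ Ioi (0 : ℝ), closure (φ x '' Ici t)

/-- The negative omega-limit set `ω*(x) = ⋂_{t<0} cl (φ(x,(-∞,t]))`. -/
def negOmegaLimitSet (φ : M → ℝ → M) (x : M) : Set M :=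
  ⋂ t ∈ Iio (0 : ℝ), closure (φ x '' Iic t)

/-- A flow is dissipative if every omega-limit set is nonempty and the closure of the
union of all omega-limit sets is compact. -/
def Dissipative (φ : M → ℝ → M) : Prop :=
  (∀ x, (omegaLimitSet φ x).Nonempty) ∧
    IsCompact (closure (⋃ x, omegaLimitSet φ x))

/-- `K` is stable: every neighborhood `U` of `K` contains a neighborhood `V` of `K`
with `φ(V,[0,∞)) ⊆ U`. -/
def FlowStable (φ : M → ℝ → M) (K : Set M) : Prop :=
  ∀ U ∈ nhdsSet K, ∃ V ∈ nhdsSet K, ∀ x ∈ V, ∀ t : ℝ, 0 ≤ t → φ x t ∈ U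

/-- `K` is negatively stable: every neighborhood `U` of `K` contains a neighborhood `V`
of `K` with `φ(V,(-∞,0]) ⊆ U`. -/
def FlowNegStable (φ : M → ℝ → M) (K : Set M) : Prop :=
  ∀ U ∈ nhdsSet K, ∃ V ∈ nhdsSet K, ∀ x ∈ V, ∀ t : ℝ, t ≤ 0 → φ x t ∈ U

/-- The region of attraction `A(K) = {x : ∅ ≠ ω(x) ⊆ K}`. -/
def attractionRegion (φ : M → ℝ → M) (K : Set M) : Set M :=
  {x | (omegaLimitSet φ x).Nonempty ∧ omegaLimitSet φ x ⊆ K}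

/-- The region of repulsion `R(K) = {x : ∅ ≠ ω*(x) ⊆ K}`. -/
def repulsionRegion (φ : M → ℝ → M) (K : Set M) : Set M :=
  {x | (negOmegaLimitSet φ x).Nonempty ∧ negOmegaLimitSet φ x ⊆ K}

/-- An attractor: a compact invariant stable set which is attracting, i.e. its region of
attraction is a neighborhood of it. -/
def IsAttractor (φ : M → ℝ → M) (K : Set M) : Prop :=
  IsCompact K ∧ FlowInvariant φ K ∧ FlowStable φ K ∧
    attractionRegion φ K ∈ nhdsSet K

/-- A repeller: a compact invariant negatively stable set which is repelling. -/
def IsRepeller (φ : M → ℝ → M) (K : Set M) : Prop :=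
  IsCompact K ∧ FlowInvariant φ K ∧ FlowNegStable φ K ∧
    repulsionRegion φ K ∈ nhdsSet K

/-- A global attractor: a compact invariant stable set whose region of attraction is the
whole space. -/
def IsGlobalAttractor (φ : M → ℝ → M) (K : Set M) : Prop :=
  IsCompact K ∧ FlowInvariant φ K ∧ FlowStable φ K ∧
    attractionRegion φ K = univ

/-- `N` is an isolating neighborhood of `K`: a compact neighborhood of `K` such that `K`
is the maximal invariant set contained in `N`. -/
def IsIsolatingNbhd (φ : M → ℝ → M) (N K : Set M) : Prop :=
  IsCompact N ∧ K ⊆ interior N ∧ FlowInvariant φ K ∧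
    ∀ S : Set M, FlowInvariant φ S → S ⊆ N → S ⊆ K

/-- An isolated invariant set: a compact invariant set having an isolating neighborhood. -/
def IsIsolatedInvariant (φ : M → ℝ → M) (K : Set M) : Prop :=
  IsCompact K ∧ FlowInvariant φ K ∧ ∃ N, IsIsolatingNbhd φ N K

/-- A parametrized family of flows `(φ_λ)_{λ ∈ [0,1]}`: jointly continuous on
`[0,1] × M × ℝ` and each `φ_λ` is a flow. -/
def IsParamFlow (φ : ℝ → M → ℝ → M) : Prop :=
  ContinuousOn (fun p : ℝ × M × ℝ => φ p.1 p.2.1 p.2.2)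
      ((Icc 0 1 : Set ℝ) ×ˢ (univ : Set (M × ℝ))) ∧
    ∀ l ∈ Icc (0 : ℝ) 1, IsFlow (φ l)

/-- `(K_λ)_{λ ∈ J}` is a continuation: each `K_λ` is an isolated invariant set of `φ_λ`
and every isolating neighborhood of `K_{λ₀}` remains an isolating neighborhood of `K_λ`
for `λ` near `λ₀` in `J`. -/
def IsContinuation (φ : ℝ → M → ℝ → M) (J : Set ℝ) (K : ℝ → Set M) : Prop :=
  (∀ l ∈ J, IsIsolatedInvariant (φ l) (K l)) ∧
    ∀ l₀ ∈ J, ∀ N : Set M, IsIsolatingNbhd (φ l₀) N (K l₀) →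
      ∃ δ > 0, ∀ l ∈ J, |l - l₀| < δ → IsIsolatingNbhd (φ l) N (K l)

/-- The family `(φ_λ)` is uniformly dissipative. -/
def UniformlyDissipative (φ : ℝ → M → ℝ → M) : Prop :=
  (∀ l ∈ Icc (0 : ℝ) 1, ∀ x, (omegaLimitSet (φ l) x).Nonempty) ∧
    IsCompact (closure (⋃ l ∈ Icc (0 : ℝ) 1, ⋃ x, omegaLimitSet (φ l) x))

end Defs

section NormedDefs

variable {E : Type*} [NormedAddCommGroup E]

/-- A coercive family of dissipative flows: for every continuation of the global
attractor of `φ₀`, the regions of attraction are bounded for all small `λ > 0`. -/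
def CoerciveFamily (φ : ℝ → E → ℝ → E) : Prop :=
  ∀ lam1 ∈ Ioc (0 : ℝ) 1, ∀ K : ℝ → Set E,
    IsContinuation φ (Icc 0 lam1) K → IsGlobalAttractor (φ 0) (K 0) →
      ∃ lam0, 0 < lam0 ∧ lam0 ≤ lam1 ∧ ∀ l, 0 < l → l < lam0 →
        IsBounded (attractionRegion (φ l) (K l))

/-- A polar family of dissipative flows: it has arbitrarily large bounded trajectories. -/
def PolarFamily (φ : ℝ → E → ℝ → E) : Prop :=
  ∀ L > 0, ∃ lam0 > 0, ∀ l, 0 < l → l < lam0 → l ≤ 1 →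
    ∃ x : E, IsBounded (range (φ l x)) ∧
      ∃ tl < (0 : ℝ), ∀ t < tl, L < ‖φ l x t‖

/-- The set of points whose trajectory tends to infinity in negative time
(the region of repulsion of the point at infinity). -/
def escapeRegion (φ : ℝ → E → ℝ → E) (l : ℝ) : Set E :=
  {x | Tendsto (fun t => ‖φ l x t‖) atBot atTop}

/-- The complementary isolated invariant set
`C_λ = ℝⁿ ∖ (A_λ(K_λ) ∪ R_λ(∞))`. -/
def complementarySet (φ : ℝ → E → ℝ → E) (K : ℝ → Set E) (l : ℝ) : Set E :=
  (attractionRegion (φ l) (K l) ∪ escapeRegion φ l)ᶜ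

end NormedDefs

section Helpers

variable {M : Type*} [MetricSpace M]


lemma FlowInvariant.mem_of {φ : M → ℝ → M} {S : Set M} (h : FlowInvariant φ S)
    {x : M} (hx : x ∈ S) (t : ℝ) : φ x t ∈ S := by
  rw [← h t]
  exact ⟨x, hx, rfl⟩

lemma IsFlow.cont_at {φ : M → ℝ → M} (hf : IsFlow φ) (t : ℝ) :
    Continuous fun z => φ z t :=
  hf.1.comp (continuous_id.prodMk continuous_const)

lemma uniform_attraction {φ : M → ℝ → M} (hf : IsFlow φ)
    {K : Set M} (hK : IsGlobalAttractor φ K) {Q : Set M} (hQ : IsCompact Q)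
    {G : Set M} (hGo : IsOpen G) (hKG : K ⊆ G) :
    ∃ T : ℝ, 0 < T ∧ ∀ z ∈ Q, ∀ t, T ≤ t → φ z t ∈ G := by
  obtain ⟨V, hV, hVp⟩ := hK.2.2.1 G (hGo.mem_nhdsSet.mpr hKG)
  obtain ⟨W, hWo, hKW, hWV⟩ := mem_nhdsSet_iff_exists.mp hV
  have hentry : ∀ y : M, ∃ s : ℝ, φ y s ∈ W := by
    intro y
    have hy : y ∈ attractionRegion φ K := by
      rw [hK.2.2.2]; exact mem_univ y
    obtain ⟨⟨p, hp⟩, hsub⟩ := hy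
    have hpW : p ∈ W := hKW (hsub hp)
    have hpc : p ∈ closure (φ y '' Ici (1 : ℝ)) := by
      have := mem_iInter₂.mp hp (1 : ℝ) (by norm_num : (1:ℝ) ∈ Ioi (0:ℝ))
      exact this
    obtain ⟨q, hqW, hq⟩ := _root_.mem_closure_iff.mp hpc W hWo hpW
    obtain ⟨s, _, rfl⟩ := hq
    exact ⟨s, hqW⟩
  choose s hs using hentry
  set O : M → Set M := fun y => (fun z => φ z (s y)) ⁻¹' W with hO
  have hOopen : ∀ y ∈ Q, IsOpen (O y) := fun y _ => hWo.preimage (hf.cont_at (s y))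
  have hcover : Q ⊆ ⋃ y ∈ Q, O y := fun y hy => mem_biUnion hy (hs y)
  obtain ⟨b, hbQ, hbfin, hbcov⟩ := hQ.elim_finite_subcover_image hOopen hcover
  obtain ⟨T₀, hT₀⟩ := (hbfin.image s).bddAbove
  refine ⟨max T₀ 1, lt_of_lt_of_le one_pos (le_max_right _ _), fun z hz t ht => ?_⟩
  obtain ⟨y, hyb, hzy⟩ := mem_iUnion₂.mp (hbcov hz)
  have hsy : s y ≤ T₀ := hT₀ (mem_image_of_mem s hyb)
  have h1 : φ z t = φ (φ z (s y)) (t - s y) := by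
    rw [hf.2.2]; ring_nf
  rw [h1]
  exact hVp _ (hWV hzy) _ (by linarith [le_trans (le_max_left T₀ 1) ht])

lemma invariant_subset_attractor {φ : M → ℝ → M} (hf : IsFlow φ)
    {K : Set M} (hK : IsGlobalAttractor φ K) {S B : Set M}
    (hS : FlowInvariant φ S) (hB : IsCompact B) (hSB : S ⊆ B) : S ⊆ K := by
  intro x hx
  have hcl : x ∈ closure K := by
    rw [Metric.mem_closure_iff]
    intro ε hε
    obtain ⟨T, hT, hattr⟩ := uniform_attraction hf hK hB
      isOpen_thickening (self_subset_thickening hε K)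
    have hxS : x ∈ (fun z => φ z T) '' S := by rw [hS T]; exact hx
    obtain ⟨z, hzS, rfl⟩ := hxS
    have := hattr z (hSB hzS) T le_rfl
    obtain ⟨y, hyK, hd⟩ := Metric.mem_thickening_iff.mp this
    exact ⟨y, hyK, hd⟩
  rwa [hK.1.isClosed.closure_eq] at hcl

lemma orbit_invariant {φ : M → ℝ → M} (hf : IsFlow φ) (x : M) :
    FlowInvariant φ (range (φ x)) := by
  intro t
  ext y
  constructor
  · rintro ⟨_, ⟨s, rfl⟩, rfl⟩
    exact ⟨s + t, (hf.2.2 x s t).symm⟩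
  · rintro ⟨s, rfl⟩
    exact ⟨φ x (s - t), ⟨s - t, rfl⟩, by simp only []; rw [hf.2.2]; ring_nf⟩

lemma finite_pos_min {ι : Type*} {b : Set ι} (hb : b.Finite) (ε : ι → ℝ)
    (hε : ∀ q ∈ b, 0 < ε q) : ∃ δ > 0, ∀ q ∈ b, δ ≤ ε q := by
  classical
  rcases hb.toFinset.eq_empty_or_nonempty with he | hne
  · refine ⟨1, one_pos, fun q hq => absurd (hb.mem_toFinset.mpr hq) (by simp [he])⟩
  · refine ⟨hb.toFinset.inf' hne ε, ?_, fun q hq => Finset.inf'_le ε (hb.mem_toFinset.mpr hq)⟩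
    rw [gt_iff_lt, Finset.lt_inf'_iff]
    exact fun q hq => hε q (hb.mem_toFinset.mp hq)

lemma param_persist {φ : ℝ → M → ℝ → M}
    (hc : ContinuousOn (fun p : ℝ × M × ℝ => φ p.1 p.2.1 p.2.2)
      ((Icc 0 1 : Set ℝ) ×ˢ (univ : Set (M × ℝ))))
    {l₀ : ℝ} (hl₀ : l₀ ∈ Icc (0:ℝ) 1) {A : Set M} (hA : IsCompact A) {a b : ℝ}
    {U : Set M} (hU : IsOpen U) (h : ∀ z ∈ A, ∀ t ∈ Icc a b, φ l₀ z t ∈ U) :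
    ∃ δ > 0, ∀ l ∈ Icc (0:ℝ) 1, |l - l₀| < δ → ∀ z ∈ A, ∀ t ∈ Icc a b, φ l z t ∈ U := by
  set f : ℝ × M × ℝ → M := fun p => φ p.1 p.2.1 p.2.2 with hf
  set s : Set (ℝ × M × ℝ) := (Icc 0 1 : Set ℝ) ×ˢ (univ : Set (M × ℝ)) with hsdef
  have key : ∀ q ∈ A ×ˢ Icc a b, ∃ ε > 0, ∃ V : Set (M × ℝ), IsOpen V ∧ q ∈ V ∧
      ∀ l ∈ Icc (0:ℝ) 1, |l - l₀| < ε → ∀ q' ∈ V, φ l q'.1 q'.2 ∈ U := by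
    rintro ⟨z, t⟩ ⟨hzA, hta⟩
    have hmem : ((l₀, z, t) : ℝ × M × ℝ) ∈ s := ⟨hl₀, trivial⟩
    have hcw : ContinuousWithinAt f s (l₀, z, t) := hc _ hmem
    have hfU : f (l₀, z, t) ∈ U := h z hzA t hta
    have hpre : f ⁻¹' U ∈ nhdsWithin (l₀, z, t) s := hcw (hU.mem_nhds hfU)
    obtain ⟨O, hOo, hOmem, hOsub⟩ := mem_nhdsWithin.mp hpre
    obtain ⟨u, V, huo, hVo, hlu, hqV, huv⟩ := isOpen_prod_iff.mp hOo l₀ (z, t) hOmem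
    obtain ⟨ε, hε, hball⟩ := Metric.isOpen_iff.mp huo l₀ hlu
    refine ⟨ε, hε, V, hVo, hqV, ?_⟩
    intro l hl hld q' hq'
    have : (l, q') ∈ O ∩ s := by
      refine ⟨huv ⟨hball ?_, hq'⟩, hl, trivial⟩
      simpa [Real.dist_eq] using hld
    exact hOsub this
  choose! ε hε V hVo hqV hVp using key
  have hAI : IsCompact (A ×ˢ Icc a b) := hA.prod isCompact_Icc
  have hcov : A ×ˢ Icc a b ⊆ ⋃ q ∈ A ×ˢ Icc a b, V q := fun q hq =>
    mem_biUnion hq (hqV q hq)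
  obtain ⟨b', hb'sub, hb'fin, hb'cov⟩ := hAI.elim_finite_subcover_image
    (fun q hq => hVo q hq) hcov
  obtain ⟨δ, hδ, hδle⟩ := finite_pos_min hb'fin ε fun q hq => hε q (hb'sub hq)
  refine ⟨δ, hδ, fun l hl hld z hz t ht => ?_⟩
  obtain ⟨q, hqb', hqmem⟩ := mem_iUnion₂.mp (hb'cov (mk_mem_prod hz ht))
  exact hVp q (hb'sub hqb') l hl (lt_of_lt_of_le hld (hδle q hqb')) (z, t) hqmem

lemma forward_bound {ψ : M → ℝ → M} (hf : IsFlow ψ) {Q' B G : Set M} (hGQ : G ⊆ Q')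
    {T : ℝ} (hT : 0 < T)
    (ha : ∀ z ∈ Q', ∀ t ∈ Icc 0 T, ψ z t ∈ B) (hb : ∀ z ∈ Q', ψ z T ∈ G) :
    ∀ z ∈ Q', ∀ t, 0 ≤ t → ψ z t ∈ B := by
  have hstep : ∀ k : ℕ, ∀ z ∈ Q', ψ z (k * T) ∈ Q' := by
    intro k
    induction k with
    | zero => intro z hz; simpa [hf.2.1] using hz
    | succ k ih =>
      intro z hz
      have h1 : ψ z ((k + 1 : ℕ) * T) = ψ (ψ z (k * T)) T := by
        rw [hf.2.2]; push_cast; ring_nf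
      rw [h1]
      exact hGQ (hb _ (ih z hz))
  intro z hz t ht
  set k := ⌊t / T⌋₊ with hk
  have h1 : (k : ℝ) * T ≤ t := by
    have := Nat.floor_le (div_nonneg ht hT.le)
    calc (k : ℝ) * T ≤ t / T * T := by nlinarith
    _ = t := by field_simp
  have h2 : t - k * T < T := by
    have h3 : t / T < (k : ℝ) + 1 := Nat.lt_floor_add_one (t / T)
    have h4 : t < ((k : ℝ) + 1) * T := (div_lt_iff₀ hT).mp h3
    linarith
  have h4 : ψ z t = ψ (ψ z (k * T)) (t - k * T) := by rw [hf.2.2]; ring_nf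
  rw [h4]
  exact ha _ (hstep k z hz) _ ⟨by linarith, by linarith⟩

lemma mem_forward_of_invariant {φ : M → ℝ → M} (hf : IsFlow φ)
    {K : Set M} (hKc : IsCompact K) (hKi : FlowInvariant φ K)
    (hω : ∀ p : M, (omegaLimitSet φ p).Nonempty)
    {W : Set M} (hWo : IsOpen W) (hωW : ∀ p : M, omegaLimitSet φ p ⊆ W)
    {x : M} (hx : x ∈ K) : ∃ y ∈ W, ∃ r : ℝ, 0 ≤ r ∧ φ y r = x := by
  -- the backward orbit closure family
  set F : ℝ → Set M := fun t => closure (φ x '' Iic t) with hF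
  have horb : ∀ s : ℝ, φ x s ∈ K := fun s => hKi.mem_of hx s
  have hFsub : ∀ t : ℝ, F t ⊆ K := fun t =>
    closure_minimal (by rintro _ ⟨s, _, rfl⟩; exact horb s) hKc.isClosed
  -- α-limit set nonempty
  have hαne : (⋂ t ∈ Iio (0:ℝ), F t).Nonempty := by
    have : (⋂ t : ↥(Iio (0:ℝ)), F t).Nonempty := by
      apply IsCompact.nonempty_iInter_of_directed_nonempty_isCompact_isClosed
      · rintro ⟨t₁, h₁⟩ ⟨t₂, h₂⟩
        refine ⟨⟨min t₁ t₂, mem_Iio.mpr (lt_of_le_of_lt (min_le_left t₁ t₂) (mem_Iio.mp h₁))⟩, ?_, ?_⟩ <;>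
          exact closure_mono (image_mono (Iic_subset_Iic.mpr (by simp [min_le_left, min_le_right])))
      · exact fun t => ⟨φ x t.1, subset_closure ⟨t.1, mem_Iic.mpr le_rfl, rfl⟩⟩
      · exact fun t => hKc.of_isClosed_subset isClosed_closure (hFsub t.1)
      · exact fun t => isClosed_closure
    obtain ⟨p, hp⟩ := this
    exact ⟨p, mem_iInter₂.mpr fun t ht => mem_iInter.mp hp ⟨t, ht⟩⟩
  obtain ⟨p, hp⟩ := hαne
  have hpmem : ∀ t ∈ Iio (0:ℝ), p ∈ F t := fun t ht => mem_iInter₂.mp hp t ht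
  -- α-limit is forward invariant along the orbit of p
  have hfwd : ∀ r : ℝ, ∀ u ∈ Iio (0:ℝ), φ p r ∈ F u := by
    intro r u hu
    set t : ℝ := min (u - r) (-1) with ht
    have htneg : t ∈ Iio (0:ℝ) := mem_Iio.mpr
      (lt_of_le_of_lt (min_le_right (u - r) (-1)) (by norm_num))
    have hpt : p ∈ closure (φ x '' Iic t) := hpmem t htneg
    have h1 : φ p r ∈ closure ((fun z => φ z r) '' (φ x '' Iic t)) := by
      apply image_closure_subset_closure_image (hf.cont_at r)
      exact mem_image_of_mem _ hpt
    refine closure_mono ?_ h1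
    rintro _ ⟨_, ⟨s, hs, rfl⟩, rfl⟩
    refine ⟨s + r, ?_, (hf.2.2 x s r).symm⟩
    have : s ≤ t := hs
    have : t ≤ u - r := min_le_left _ _
    simp only [mem_Iic]; linarith
  -- ω(p) ⊆ α(x), and ω(p) ⊆ W, so α(x) meets W
  obtain ⟨c, hc⟩ := hω p
  have hcW : c ∈ W := hωW p hc
  have hcα : ∀ u ∈ Iio (0:ℝ), c ∈ F u := by
    intro u hu
    have h1 : c ∈ closure (φ p '' Ici (1:ℝ)) :=
      mem_iInter₂.mp hc 1 (by norm_num)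
    have h2 : φ p '' Ici (1:ℝ) ⊆ F u := by
      rintro _ ⟨r, _, rfl⟩; exact hfwd r u hu
    have h3 : closure (φ p '' Ici (1:ℝ)) ⊆ F u :=
      closure_minimal h2 isClosed_closure
    exact h3 h1
  -- c ∈ closure (φ x '' Iic (-1)) and c ∈ W open
  have h4 : c ∈ closure (φ x '' Iic (-1:ℝ)) := hcα (-1) (by norm_num)
  obtain ⟨q, hqW, hq⟩ := _root_.mem_closure_iff.mp h4 W hWo hcW
  obtain ⟨s, hs, rfl⟩ := hq
  refine ⟨φ x s, hqW, -s, by simp at hs ⊢; linarith, ?_⟩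
  rw [hf.2.2]; simp [hf.2.1]

end Helpers

/-- For a parametrized family of dissipative flows on a noncompact
locally compact metric space, the family of global attractors `(K_λ)_{λ∈[0,1]}` is a
continuation of `K₀` if and only if the family of flows is uniformly dissipative. -/
theorem globalAttractors_continuation_iff_uniformlyDissipative
    {M : Type*} [MetricSpace M] [LocallyCompactSpace M] [NoncompactSpace M]
    (φ : ℝ → M → ℝ → M) (hφ : IsParamFlow φ)
    (hdiss : ∀ l ∈ Icc (0 : ℝ) 1, Dissipative (φ l))
    (K : ℝ → Set M) (hK : ∀ l ∈ Icc (0 : ℝ) 1, IsGlobalAttractor (φ l) (K l)) :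
    IsContinuation φ (Icc 0 1) K ↔ UniformlyDissipative φ := by
  obtain ⟨hφc, hφf⟩ := hφ
  constructor
  · -- continuation → uniformly dissipative
    rintro ⟨hiso, hcont⟩
    refine ⟨fun l hl x => (hdiss l hl).1 x, ?_⟩
    have hch : ∀ l₀ ∈ Icc (0:ℝ) 1, ∃ N : Set M, ∃ δ : ℝ, 0 < δ ∧ IsCompact N ∧
        ∀ l ∈ Icc (0:ℝ) 1, |l - l₀| < δ → K l ⊆ N := by
      intro l₀ hl₀
      obtain ⟨_, _, N, hN⟩ := hiso l₀ hl₀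
      obtain ⟨δ, hδ, hδp⟩ := hcont l₀ hl₀ N hN
      exact ⟨N, δ, hδ, hN.1, fun l hl hld => (hδp l hl hld).2.1.trans interior_subset⟩
    choose! N δ hδ hNc hNsub using hch
    have hcov : Icc (0:ℝ) 1 ⊆ ⋃ l₀ ∈ Icc (0:ℝ) 1, ball l₀ (δ l₀) :=
      fun l hl => mem_biUnion hl (mem_ball_self (hδ l hl))
    obtain ⟨b, hbsub, hbfin, hbcov⟩ := isCompact_Icc.elim_finite_subcover_image
      (fun l₀ _ => isOpen_ball) hcov
    have hZc : IsCompact (⋃ l₀ ∈ b, N l₀) :=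
      hbfin.isCompact_biUnion fun l₀ hl₀ => hNc l₀ (hbsub hl₀)
    have hsub : (⋃ l ∈ Icc (0:ℝ) 1, ⋃ x, omegaLimitSet (φ l) x) ⊆ ⋃ l₀ ∈ b, N l₀ := by
      intro y hy
      simp only [mem_iUnion] at hy
      obtain ⟨l, hl, x, hx⟩ := hy
      obtain ⟨l₀, hl₀b, hlb⟩ := mem_iUnion₂.mp (hbcov hl)
      have hKsub : K l ⊆ N l₀ := by
        refine hNsub l₀ (hbsub hl₀b) l hl ?_
        have := mem_ball.mp hlb
        rwa [Real.dist_eq] at this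
      have hxK : omegaLimitSet (φ l) x ⊆ K l := by
        have hxa : x ∈ attractionRegion (φ l) (K l) := by
          rw [(hK l hl).2.2.2]; exact mem_univ x
        exact hxa.2
      exact mem_biUnion hl₀b (hKsub (hxK hx))
    exact hZc.of_isClosed_subset isClosed_closure (closure_minimal hsub hZc.isClosed)
  · -- uniformly dissipative → continuation
    rintro ⟨hne, hCc⟩
    obtain ⟨C', hC'c, hCC'⟩ := exists_compact_superset hCc
    refine ⟨fun l hl => ⟨(hK l hl).1, (hK l hl).2.1, ?_⟩, ?_⟩
    · obtain ⟨N, hNc, hKN⟩ := exists_compact_superset (hK l hl).1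
      exact ⟨N, hNc, hKN, (hK l hl).2.1, fun S hS hSN =>
        invariant_subset_attractor (hφf l hl) (hK l hl) hS hNc hSN⟩
    intro l₀ hl₀ N hN
    have hKl₀ := hK l₀ hl₀
    have hfl₀ := hφf l₀ hl₀
    obtain ⟨L, hLc, hKintL⟩ := exists_compact_superset hKl₀.1
    set G : Set M := interior L with hGdef
    have hGo : IsOpen G := isOpen_interior
    have hKG : K l₀ ⊆ G := hKintL
    have hclGL : closure G ⊆ L := closure_minimal interior_subset hLc.isClosed
    have hclGc : IsCompact (closure G) := hLc.of_isClosed_subset isClosed_closure hclGL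
    set Q' : Set M := closure G ∪ C' with hQ'def
    have hQ'c : IsCompact Q' := hclGc.union hC'c
    obtain ⟨T, hT, hTattr⟩ := uniform_attraction hfl₀ hKl₀ hQ'c hGo hKG
    have hb₀ : ∀ z ∈ Q', φ l₀ z T ∈ G := fun z hz => hTattr z hz T le_rfl
    have hImc : IsCompact ((fun p : M × ℝ => φ l₀ p.1 p.2) '' (Q' ×ˢ Icc 0 T)) :=
      (hQ'c.prod isCompact_Icc).image hfl₀.1
    obtain ⟨B, hBc, hImB⟩ := exists_compact_superset hImc
    have ha₀ : ∀ z ∈ Q', ∀ t ∈ Icc (0:ℝ) T, φ l₀ z t ∈ interior B :=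
      fun z hz t ht => hImB ⟨(z, t), mk_mem_prod hz ht, rfl⟩
    obtain ⟨δ₁, hδ₁, hδ₁p⟩ := param_persist hφc hl₀ hQ'c isOpen_interior ha₀
    have hb₀' : ∀ z ∈ Q', ∀ t ∈ Icc T T, φ l₀ z t ∈ G := by
      rintro z hz t ⟨ht1, ht2⟩
      have ht : t = T := le_antisymm ht2 ht1
      rw [ht]; exact hb₀ z hz
    obtain ⟨δ₂, hδ₂, hδ₂p⟩ := param_persist hφc hl₀ hQ'c hGo hb₀'
    have hδ₃ : 0 < min δ₁ δ₂ := lt_min hδ₁ hδ₂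
    have hGQ' : G ⊆ Q' := fun z hz => Or.inl (subset_closure hz)
    have H1 : ∀ l ∈ Icc (0:ℝ) 1, |l - l₀| < min δ₁ δ₂ → K l ⊆ B := by
      intro l hl hld x hx
      have hfl := hφf l hl
      have hforward : ∀ z ∈ Q', ∀ t, 0 ≤ t → φ l z t ∈ B := by
        have ha := hδ₁p l hl (lt_of_lt_of_le hld (min_le_left _ _))
        have hb := hδ₂p l hl (lt_of_lt_of_le hld (min_le_right _ _))
        have hb' : ∀ z ∈ Q', φ l z T ∈ G := fun z hz => hb z hz T ⟨le_rfl, le_rfl⟩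
        exact forward_bound hfl hGQ' hT
          (fun z hz t ht => interior_subset (ha z hz t ht)) hb'
      have hωW : ∀ p : M, omegaLimitSet (φ l) p ⊆ interior C' := by
        intro p q hq
        exact hCC' (subset_closure (mem_biUnion hl (mem_iUnion.mpr ⟨p, hq⟩)))
      obtain ⟨y, hyW, r, hr, hyr⟩ := mem_forward_of_invariant hfl (hK l hl).1
        (hK l hl).2.1 (hdiss l hl).1 isOpen_interior hωW hx
      rw [← hyr]
      exact hforward y (Or.inr (interior_subset hyW)) r hr
    have H2 : ∃ δ : ℝ, 0 < δ ∧ ∀ l ∈ Icc (0:ℝ) 1, |l - l₀| < δ → K l ⊆ interior N := by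
      by_contra hcon
      push_neg at hcon
      have hseq : ∀ n : ℕ, ∃ l', l' ∈ Icc (0:ℝ) 1 ∧
          |l' - l₀| < min (min δ₁ δ₂) (1 / (n + 1)) ∧ ¬ K l' ⊆ interior N := by
        intro n
        obtain ⟨l', hl', hld, hns⟩ := hcon (min (min δ₁ δ₂) (1 / (n + 1)))
          (lt_min hδ₃ (by positivity))
        exact ⟨l', hl', hld, hns⟩
      choose l hlI hld hns using hseq
      have hxs : ∀ n : ℕ, ∃ x, x ∈ K (l n) ∧ x ∉ interior N := fun n =>
        not_subset.mp (hns n)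
      choose x hxK hxN using hxs
      have hxB : ∀ n, x n ∈ B := fun n => H1 (l n) (hlI n)
        (lt_of_lt_of_le (hld n) (min_le_left _ _)) (hxK n)
      obtain ⟨a, haB, ψ, hψ, hψt⟩ := hBc.tendsto_subseq hxB
      have hlt : Tendsto (fun n => l (ψ n)) atTop (𝓝 l₀) := by
        rw [tendsto_iff_dist_tendsto_zero]
        have hg : Tendsto (fun n : ℕ => 1 / ((ψ n : ℝ) + 1)) atTop (𝓝 0) :=
          tendsto_one_div_add_atTop_nhds_zero_nat.comp hψ.tendsto_atTop
        refine squeeze_zero (fun n => dist_nonneg) (fun n => ?_) hg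
        have h := hld (ψ n)
        rw [Real.dist_eq]
        exact le_of_lt (lt_of_lt_of_le h (min_le_right _ _))
      have horb : ∀ t : ℝ, φ l₀ a t ∈ B := by
        intro t
        have hcw : ContinuousWithinAt (fun p : ℝ × M × ℝ => φ p.1 p.2.1 p.2.2)
            ((Icc 0 1 : Set ℝ) ×ˢ (univ : Set (M × ℝ))) (l₀, a, t) :=
          hφc _ ⟨hl₀, trivial⟩
        have hg : Tendsto (fun n : ℕ => ((l (ψ n), (x (ψ n), t)) : ℝ × M × ℝ))
            atTop (nhdsWithin (l₀, a, t) ((Icc 0 1 : Set ℝ) ×ˢ (univ : Set (M × ℝ)))) := by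
          rw [tendsto_nhdsWithin_iff]
          exact ⟨hlt.prodMk_nhds (hψt.prodMk_nhds tendsto_const_nhds),
            Filter.Eventually.of_forall fun n => ⟨hlI (ψ n), trivial⟩⟩
        have htend : Tendsto (fun n : ℕ => φ (l (ψ n)) (x (ψ n)) t) atTop
            (𝓝 (φ l₀ a t)) := hcw.tendsto.comp hg
        refine hBc.isClosed.mem_of_tendsto htend (Filter.Eventually.of_forall fun n => ?_)
        have hmem : φ (l (ψ n)) (x (ψ n)) t ∈ K (l (ψ n)) :=
          ((hK (l (ψ n)) (hlI (ψ n))).2.1).mem_of (hxK (ψ n)) t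
        exact H1 (l (ψ n)) (hlI (ψ n))
          (lt_of_lt_of_le (hld (ψ n)) (min_le_left _ _)) hmem
      have hrange : range (φ l₀ a) ⊆ K l₀ := by
        refine invariant_subset_attractor hfl₀ hKl₀ (orbit_invariant hfl₀ a) hBc ?_
        rintro _ ⟨t, rfl⟩; exact horb t
      have haK : a ∈ K l₀ := by
        have h0 : φ l₀ a 0 ∈ K l₀ := hrange ⟨0, rfl⟩
        rwa [hfl₀.2.1] at h0
      have haN : a ∈ interior N := hN.2.1 haK
      have hev : ∀ᶠ n in atTop, x (ψ n) ∈ interior N :=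
        hψt.eventually (isOpen_interior.eventually_mem haN)
      obtain ⟨n, hn⟩ := hev.exists
      exact hxN (ψ n) hn
    obtain ⟨δ, hδ, hδp⟩ := H2
    exact ⟨δ, hδ, fun l hl hld => ⟨hN.1, hδp l hl hld, (hK l hl).2.1,
      fun S hS hSN => invariant_subset_attractor (hφf l hl) (hK l hl) hS hN.1 hSN⟩⟩
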